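/- Fix a finite nonempty set Γ of R-formulas, with the reachability relation ⇒ and the witness set B constructed from Γ. The following are equivalent: (1) Γ ⊢_R ⊥ for some absurdity ⊥; (2) Γ is unsatisfiable; (3) Condition (C) holds, i.e., there exist elements b_{V,i}, b_{W,j} of B, unary atoms q, o, and a binary atom r such that one of the following is true: (a) V ⇒ q and V ⇒ q̄; (b) V ⇒ ∃(q,r̄), V ⇒ ∀(o,r), and q ⇒ o; (c) V ⇒ ∀(q,r̄), V ⇒ ∃(o,r), and o ⇒ q; (d) V ⇒ ∀(q,r̄), V ⇒ ∀(o,r), W ⇒ q, and W ⇒ o. -/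

import Mathlib

/-!
Syllogistic logics (Pratt-Hartmann & Moss, "Logics for the Relational Syllogistic").

Unary atoms and binary atoms are encoded by `ℕ` (two disjoint copies).
-/

namespace Syllogistic

/-- Unary literals: a unary atom `p` or its negation `p̄`. -/
inductive Lit : Type
  | pos : ℕ → Lit
  | neg : ℕ → Lit
deriving DecidableEq

/-- Binary literals: a binary atom `r` or its negation `r̄`. -/
inductive BLit : Type
  | pos : ℕ → BLit
  | neg : ℕ → BLit
deriving DecidableEq

/-- Bar (negation) on unary literals. -/
def Lit.bar : Lit → Lit
  | .pos p => .neg p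
  | .neg p => .pos p

/-- Bar (negation) on binary literals. -/
def BLit.bar : BLit → BLit
  | .pos r => .neg r
  | .neg r => .pos r

/-- A unary literal is positive if it is an atom. -/
def Lit.isPos : Lit → Prop
  | .pos _ => True
  | .neg _ => False

/-- A binary literal is positive if it is an atom. -/
def BLit.isPos : BLit → Prop
  | .pos _ => True
  | .neg _ => False

/-- e-terms: a unary literal `l`, or `∃(l,t)`, or `∀(l,t)`. -/
inductive ETerm : Type
  | lit : Lit → ETerm
  | ex : Lit → BLit → ETerm
  | al : Lit → BLit → ETerm
deriving DecidableEq

/-- The e-term consisting of a single positive unary atom. -/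
def atomE (p : ℕ) : ETerm := .lit (.pos p)

/-- Bar on e-terms: `∀(l,t)‾ = ∃(l,t̄)` and `∃(l,t)‾ = ∀(l,t̄)`. -/
def ETerm.bar : ETerm → ETerm
  | .lit l => .lit l.bar
  | .ex l t => .al l t.bar
  | .al l t => .ex l t.bar

/-- c-terms: a unary literal, or `∃(p,t)`/`∀(p,t)` with `p` a unary atom. -/
def ETerm.isC : ETerm → Prop
  | .lit _ => True
  | .ex l _ => l.isPos
  | .al l _ => l.isPos

/-- Positive c-terms: the literals occurring in them are positive. -/
def ETerm.isPosC : ETerm → Prop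
  | .lit l => l.isPos
  | .ex l t => l.isPos ∧ t.isPos
  | .al l t => l.isPos ∧ t.isPos

/-- R*†-formulas: `∃(e,f)` or `∀(e,f)` for e-terms `e`, `f`. -/
inductive Formula : Type
  | ex : ETerm → ETerm → Formula
  | al : ETerm → ETerm → Formula
deriving DecidableEq

/-- Negation of a formula: `∀(e,f)‾ = ∃(e,f̄)`, `∃(e,f)‾ = ∀(e,f̄)`. -/
def Formula.bar : Formula → Formula
  | .ex e f => .al e f.bar
  | .al e f => .ex e f.bar

/-- The silent identification: `∃(e,f)` with `∃(f,e)`, and `∀(e,f)` with `∀(f̄,ē)`. -/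
def Formula.swap : Formula → Formula
  | .ex e f => .ex f e
  | .al e f => .al f.bar e.bar

/-- Two formulas are identified if they are equal or are swaps of each other. -/
def FormEquiv (φ ψ : Formula) : Prop := ψ = φ ∨ ψ = φ.swap

/-- An absurdity is a formula of the form `∃(e,ē)`. -/
def IsAbsurd (φ : Formula) : Prop := ∃ e : ETerm, φ = .ex e e.bar

/-- A substitution maps unary atoms to unary atoms and binary atoms to binary atoms. -/
structure Subst where
  u : ℕ → ℕ
  b : ℕ → ℕ

def Lit.subst (g : Subst) : Lit → Lit
  | .pos p => .pos (g.u p)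
  | .neg p => .neg (g.u p)

def BLit.subst (g : Subst) : BLit → BLit
  | .pos r => .pos (g.b r)
  | .neg r => .neg (g.b r)

def ETerm.subst (g : Subst) : ETerm → ETerm
  | .lit l => .lit (l.subst g)
  | .ex l t => .ex (l.subst g) (t.subst g)
  | .al l t => .al (l.subst g) (t.subst g)

/-- Atom-wise application of a substitution to a formula. -/
def Formula.subst (g : Subst) : Formula → Formula
  | .ex e f => .ex (e.subst g) (f.subst g)
  | .al e f => .al (e.subst g) (f.subst g)

/-- A structure over a domain `A`: an interpretation of every unary atom as a
subset of `A` and of every binary atom as a binary relation on `A`.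
(Non-emptiness of the domain is imposed where structures are quantified over.) -/
structure Interp (A : Type) where
  up : ℕ → Set A
  br : ℕ → Set (A × A)

def Interp.litI {A : Type} (M : Interp A) : Lit → Set A
  | .pos p => M.up p
  | .neg p => (M.up p)ᶜ

def Interp.blitI {A : Type} (M : Interp A) : BLit → Set (A × A)
  | .pos r => M.br r
  | .neg r => (M.br r)ᶜ

/-- Interpretation of e-terms. -/
def Interp.etermI {A : Type} (M : Interp A) : ETerm → Set A
  | .lit l => M.litI l
  | .ex l t => {a | ∃ b ∈ M.litI l, (a, b) ∈ M.blitI t}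
  | .al l t => {a | ∀ b ∈ M.litI l, (a, b) ∈ M.blitI t}

/-- Truth of a formula in a structure. -/
def Interp.Sat {A : Type} (M : Interp A) : Formula → Prop
  | .al e f => M.etermI e ⊆ M.etermI f
  | .ex e f => (M.etermI e ∩ M.etermI f).Nonempty

/-- Truth of a set of formulas in a structure. -/
def Interp.SatSet {A : Type} (M : Interp A) (Θ : Set Formula) : Prop :=
  ∀ θ ∈ Θ, M.Sat θ

/-- `Θ ⊨ θ`: every structure (with non-empty domain) satisfying `Θ` satisfies `θ`. -/
def Entails (Θ : Set Formula) (θ : Formula) : Prop :=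
  ∀ (A : Type), Nonempty A → ∀ M : Interp A, M.SatSet Θ → M.Sat θ

/-- `Θ` is satisfied in some structure with non-empty domain. -/
def Satisfiable (Θ : Set Formula) : Prop :=
  ∃ (A : Type), Nonempty A ∧ ∃ M : Interp A, M.SatSet Θ

/-- A syllogistic rule: a finite set of antecedents together with a consequent. -/
structure SylRule where
  ants : Finset Formula
  con : Formula

/-- A rule is sound if its antecedents entail its consequent. -/
def SylRule.Sound (R : SylRule) : Prop := Entails (↑R.ants) R.con

/-- A rule is a rule *in* the fragment `F` if all its formulas lie in `F`. -/
def RuleIn (F : Set Formula) (R : SylRule) : Prop :=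
  (∀ ψ ∈ R.ants, ψ ∈ F) ∧ R.con ∈ F

/-- The instance of a rule under a substitution. -/
def SylRule.inst (g : Subst) (R : SylRule) : SylRule :=
  ⟨R.ants.image (Formula.subst g), R.con.subst g⟩

/-- Two rules are the same modulo the identification of formulas. -/
def RuleEquiv (R R' : SylRule) : Prop :=
  (∀ ψ ∈ R.ants, ∃ ψ' ∈ R'.ants, FormEquiv ψ ψ') ∧
  (∀ ψ' ∈ R'.ants, ∃ ψ ∈ R.ants, FormEquiv ψ ψ') ∧
  FormEquiv R.con R'.con

/-- The direct derivation relation `⊢_X` determined by a set `X` of syllogistic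
rules: premises may be used, and instances of rules applied; formulas are
treated up to the silent identification. -/
inductive Derives (X : Set SylRule) : Set Formula → Formula → Prop
  | mem {Θ : Set Formula} {θ : Formula} : θ ∈ Θ → Derives X Θ θ
  | rule {Θ : Set Formula} (R : SylRule) (g : Subst) :
      R ∈ X → (∀ ψ ∈ R.ants, Derives X Θ (ψ.subst g)) →
      Derives X Θ (R.con.subst g)
  | ident {Θ : Set Formula} {φ ψ : Formula} :
      Derives X Θ φ → FormEquiv φ ψ → Derives X Θ ψ

/-- The indirect derivation relation `⊩_X`: as `⊢_X`, together with
*reductio ad absurdum*. -/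
inductive IDerives (X : Set SylRule) : Set Formula → Formula → Prop
  | mem {Θ : Set Formula} {θ : Formula} : θ ∈ Θ → IDerives X Θ θ
  | rule {Θ : Set Formula} (R : SylRule) (g : Subst) :
      R ∈ X → (∀ ψ ∈ R.ants, IDerives X Θ (ψ.subst g)) →
      IDerives X Θ (R.con.subst g)
  | ident {Θ : Set Formula} {φ ψ : Formula} :
      IDerives X Θ φ → FormEquiv φ ψ → IDerives X Θ ψ
  | raa {Θ : Set Formula} {θ b : Formula} :
      IsAbsurd b → IDerives X (Θ ∪ {θ.bar}) b → IDerives X Θ θ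

/-- Soundness of a derivation relation for the fragment `F`. -/
def SoundFor (F : Set Formula) (D : Set Formula → Formula → Prop) : Prop :=
  ∀ (Θ : Set Formula) (θ : Formula), Θ ⊆ F → θ ∈ F → D Θ θ → Entails Θ θ

/-- Completeness of a derivation relation for the fragment `F`. -/
def CompleteFor (F : Set Formula) (D : Set Formula → Formula → Prop) : Prop :=
  ∀ (Θ : Set Formula) (θ : Formula), Θ ⊆ F → θ ∈ F → Entails Θ θ → D Θ θ

/-- Refutation-completeness for the fragment `F`: every unsatisfiable set of
`F`-formulas derives some absurdity. -/
def RefutationCompleteFor (F : Set Formula) (D : Set Formula → Formula → Prop) : Prop :=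
  ∀ Θ : Set Formula, Θ ⊆ F → ¬ Satisfiable Θ → ∃ b, IsAbsurd b ∧ D Θ b

/-- Consistency of a set of formulas with respect to `⊩_X`. -/
def Consistent (X : Set SylRule) (Θ : Set Formula) : Prop :=
  ¬ ∃ b, IsAbsurd b ∧ IDerives X Θ b

/-! ### The six fragments -/

/-- The fragment `S`: `∃(p,l)`, `∃(l,p)`, `∀(p,l)`, `∀(l,p̄)`. -/
def FragS : Set Formula :=
  {φ | (∃ (p : ℕ) (l : Lit), φ = .ex (atomE p) (.lit l)) ∨
       (∃ (p : ℕ) (l : Lit), φ = .ex (.lit l) (atomE p)) ∨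
       (∃ (p : ℕ) (l : Lit), φ = .al (atomE p) (.lit l)) ∨
       (∃ (p : ℕ) (l : Lit), φ = .al (.lit l) (.lit (.neg p)))}

/-- The fragment `S†`: `∃(l,m)`, `∀(l,m)` for unary literals `l`, `m`. -/
def FragSdag : Set Formula :=
  {φ | ∃ l m : Lit, φ = .ex (.lit l) (.lit m) ∨ φ = .al (.lit l) (.lit m)}

/-- The fragment `R`: `∃(p,c)`, `∃(c,p)`, `∀(p,c)`, `∀(c,p̄)` for a c-term `c`. -/
def FragR : Set Formula :=
  {φ | ∃ (p : ℕ) (c : ETerm), c.isC ∧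
       (φ = .ex (atomE p) c ∨ φ = .ex c (atomE p) ∨
        φ = .al (atomE p) c ∨ φ = .al c (.lit (.neg p)))}

/-- The fragment `R†`: `∃(l,e)`, `∃(e,l)`, `∀(l,e)`, `∀(e,l)` for an e-term `e`. -/
def FragRdag : Set Formula :=
  {φ | ∃ (l : Lit) (e : ETerm),
       φ = .ex (.lit l) e ∨ φ = .ex e (.lit l) ∨
       φ = .al (.lit l) e ∨ φ = .al e (.lit l)}

/-- The fragment `R*`: `∃(c⁺,d)`, `∃(d,c⁺)`, `∀(c⁺,d)`, `∀(d,c⁺‾)` with `c⁺` a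
positive c-term and `d` a c-term. -/
def FragRstar : Set Formula :=
  {φ | ∃ c d : ETerm, c.isPosC ∧ d.isC ∧
       (φ = .ex c d ∨ φ = .ex d c ∨ φ = .al c d ∨ φ = .al d c.bar)}

/-- The fragment `R*†`: all formulas. -/
def FragRstardag : Set Formula := Set.univ

/-- The six syllogistic fragments. -/
def IsFragment (F : Set Formula) : Prop :=
  F = FragS ∨ F = FragSdag ∨ F = FragR ∨ F = FragRdag ∨ F = FragRstar ∨ F = FragRstardag

/-! ### Rule sets -/

/-- The rule set `S`: (D1), (D2), (D3), (B), (A), (T), (I), (X). -/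
def RuleSetS : Set SylRule :=
  {R | (∃ (p q : ℕ) (l : Lit),
          R = ⟨{.al (atomE q) (.lit l), .ex (atomE p) (atomE q)}, .ex (atomE p) (.lit l)⟩) ∨
       (∃ (p q : ℕ) (l : Lit),
          R = ⟨{.ex (atomE p) (.lit l), .al (atomE p) (atomE q)}, .ex (atomE q) (.lit l)⟩) ∨
       (∃ (p q : ℕ) (l : Lit),
          R = ⟨{.al (atomE q) (.lit l.bar), .ex (atomE p) (.lit l)}, .ex (atomE p) (.lit (.neg q))⟩) ∨
       (∃ (p q : ℕ) (l : Lit),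
          R = ⟨{.al (atomE p) (atomE q), .al (atomE q) (.lit l)}, .al (atomE p) (.lit l)⟩) ∨
       (∃ (p : ℕ) (l : Lit),
          R = ⟨{.al (atomE p) (.lit (.neg p))}, .al (atomE p) (.lit l)⟩) ∨
       (∃ p : ℕ, R = ⟨∅, .al (atomE p) (atomE p)⟩) ∨
       (∃ (p : ℕ) (l : Lit),
          R = ⟨{.ex (atomE p) (.lit l)}, .ex (atomE p) (atomE p)⟩) ∨
       (∃ φ ψ : Formula, φ ∈ FragS ∧ ψ ∈ FragS ∧ R = ⟨{ψ, ψ.bar}, φ⟩)}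

/-- The rule set `S†`: (D), (B), (A), (T), (I), (N), (X). -/
def RuleSetSdag : Set SylRule :=
  {R | (∃ l m n : Lit,
          R = ⟨{.ex (.lit l) (.lit n), .al (.lit l) (.lit m)}, .ex (.lit m) (.lit n)⟩) ∨
       (∃ l m n : Lit,
          R = ⟨{.al (.lit l) (.lit m), .al (.lit m) (.lit n)}, .al (.lit l) (.lit n)⟩) ∨
       (∃ l m : Lit, R = ⟨{.al (.lit l) (.lit l.bar)}, .al (.lit l) (.lit m)⟩) ∨
       (∃ l : Lit, R = ⟨∅, .al (.lit l) (.lit l)⟩) ∨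
       (∃ l m : Lit, R = ⟨{.ex (.lit l) (.lit m)}, .ex (.lit l) (.lit l)⟩) ∨
       (∃ l : Lit, R = ⟨{.al (.lit l.bar) (.lit l)}, .ex (.lit l) (.lit l)⟩) ∨
       (∃ φ ψ : Formula, φ ∈ FragSdag ∧ ψ ∈ FragSdag ∧ R = ⟨{ψ, ψ.bar}, φ⟩)}

/-- The rules (B), (T) and (A) of the rule set `S†`. -/
def RuleSetBTA : Set SylRule :=
  {R | (∃ l m n : Lit,
          R = ⟨{.al (.lit l) (.lit m), .al (.lit m) (.lit n)}, .al (.lit l) (.lit n)⟩) ∨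
       (∃ l : Lit, R = ⟨∅, .al (.lit l) (.lit l)⟩) ∨
       (∃ l m : Lit, R = ⟨{.al (.lit l) (.lit l.bar)}, .al (.lit l) (.lit m)⟩)}

/-- The rule set `R`: (D1), (D2), (D3), (B), (T), (I), (A), (II), (∀∀), (∃∃), (∀∃). -/
def RuleSetR : Set SylRule :=
  {R | (∃ (p q : ℕ) (c : ETerm), c.isC ∧
          R = ⟨{.ex (atomE p) (atomE q), .al (atomE q) c}, .ex (atomE p) c⟩) ∨
       (∃ (p q : ℕ) (c : ETerm), c.isC ∧
          R = ⟨{.al (atomE p) (atomE q), .ex (atomE p) c}, .ex (atomE q) c⟩) ∨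
       (∃ (p q : ℕ) (c : ETerm), c.isC ∧
          R = ⟨{.al (atomE q) c.bar, .ex (atomE p) c}, .ex (atomE p) (.lit (.neg q))⟩) ∨
       (∃ (p q : ℕ) (c : ETerm), c.isC ∧
          R = ⟨{.al (atomE p) (atomE q), .al (atomE q) c}, .al (atomE p) c⟩) ∨
       (∃ p : ℕ, R = ⟨∅, .al (atomE p) (atomE p)⟩) ∨
       (∃ (p : ℕ) (c : ETerm), c.isC ∧
          R = ⟨{.ex (atomE p) c}, .ex (atomE p) (atomE p)⟩) ∨
       (∃ (p : ℕ) (c : ETerm), c.isC ∧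
          R = ⟨{.al (atomE p) (.lit (.neg p))}, .al (atomE p) c⟩) ∨
       (∃ (p q : ℕ) (t : BLit),
          R = ⟨{.ex (atomE p) (.ex (.pos q) t)}, .ex (atomE q) (atomE q)⟩) ∨
       (∃ (p q q' : ℕ) (t : BLit),
          R = ⟨{.al (atomE p) (.al (.pos q') t), .ex (atomE q) (atomE q')},
               .al (atomE p) (.ex (.pos q) t)⟩) ∨
       (∃ (p q q' : ℕ) (t : BLit),
          R = ⟨{.ex (atomE p) (.ex (.pos q) t), .al (atomE q) (atomE q')},
               .ex (atomE p) (.ex (.pos q') t)⟩) ∨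
       (∃ (p q q' : ℕ) (t : BLit),
          R = ⟨{.al (atomE p) (.ex (.pos q) t), .al (atomE q) (atomE q')},
               .al (atomE p) (.ex (.pos q') t)⟩)}

/-- The rule set `R*`: (T), (I), (B), (D1), (D2), (J), (K), (L), (II), (Z), (W). -/
def RuleSetRstar : Set SylRule :=
  {R | (∃ c : ETerm, c.isPosC ∧ R = ⟨∅, .al c c⟩) ∨
       (∃ c d : ETerm, c.isPosC ∧ d.isC ∧ R = ⟨{.ex c d}, .ex c c⟩) ∨
       (∃ b c d : ETerm, b.isPosC ∧ c.isPosC ∧ d.isC ∧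
          R = ⟨{.al b c, .al c d}, .al b d⟩) ∨
       (∃ b c d : ETerm, b.isPosC ∧ c.isPosC ∧ d.isC ∧
          R = ⟨{.ex b c, .al c d}, .ex b d⟩) ∨
       (∃ b c d : ETerm, b.isPosC ∧ c.isPosC ∧ d.isC ∧
          R = ⟨{.al b c, .ex b d}, .ex c d⟩) ∨
       (∃ p q r : ℕ,
          R = ⟨{.al (atomE p) (atomE q)},
               .al (.al (.pos q) (.pos r)) (.al (.pos p) (.pos r))⟩) ∨
       (∃ p q r : ℕ,
          R = ⟨{.al (atomE p) (atomE q)},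
               .al (.ex (.pos p) (.pos r)) (.ex (.pos q) (.pos r))⟩) ∨
       (∃ p q r : ℕ,
          R = ⟨{.ex (atomE p) (atomE q)},
               .al (.al (.pos p) (.pos r)) (.ex (.pos q) (.pos r))⟩) ∨
       (∃ p q r : ℕ,
          R = ⟨{.ex (atomE q) (.ex (.pos p) (.pos r))}, .ex (atomE p) (atomE p)⟩) ∨
       (∃ (p r : ℕ) (c : ETerm), c.isPosC ∧
          R = ⟨{.al (atomE p) (.lit (.neg p))}, .al c (.al (.pos p) (.pos r))⟩) ∨
       (∃ p r : ℕ,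
          R = ⟨{.al (atomE p) (.lit (.neg p))},
               .ex (.al (.pos p) (.pos r)) (.al (.pos p) (.pos r))⟩)}

/-! ### Auxiliary notions for particular statements -/

/-- Universal S†-formulas. -/
def IsUnivSdag (φ : Formula) : Prop := ∃ l m : Lit, φ = .al (.lit l) (.lit m)

/-- Existential S†-formulas. -/
def IsExSdag (φ : Formula) : Prop := ∃ l m : Lit, φ = .ex (.lit l) (.lit m)

/-- The closure `V^Φ` of a set of unary literals: all `m` with
`Φ ⊢_BTA ∀(l,m)` for some `l ∈ V`. -/
def litClosure (Φ : Set Formula) (V : Set Lit) : Set Lit :=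
  {m | ∃ l ∈ V, Derives RuleSetBTA Φ (.al (.lit l) (.lit m))}

/-- Membership in a set of formulas, modulo the silent identification. -/
def MemMod (Γ : Set Formula) (φ : Formula) : Prop := ∃ ψ ∈ Γ, FormEquiv φ ψ

/-- The reachability relation `c ⇒ d` determined by `Γ`. -/
def Reach (Γ : Set Formula) (c d : ETerm) : Prop :=
  c = d ∨ ∃ (k : ℕ) (p : ℕ → ℕ), c = atomE (p 0) ∧
    MemMod Γ (.al (atomE (p k)) d) ∧
    ∀ i < k, MemMod Γ (.al (atomE (p i)) (atomE (p (i + 1))))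

/-- `V ⇒ d` for a set `V` of c-terms. -/
def ReachSet (Γ : Set Formula) (V : Set ETerm) (d : ETerm) : Prop :=
  ∃ c ∈ V, Reach Γ c d

/-- The witness sets `B_k`; the formal object `b_{V,i}` is encoded as the
pair `(V, i)`. -/
def BSet (Γ : Set Formula) : ℕ → Set (Set ETerm × ℕ)
  | 0 => {x | ∃ (p : ℕ) (c : ETerm), c.isC ∧ MemMod Γ (.ex (atomE p) c) ∧
            x = ({atomE p, c}, 0)}
  | k + 1 => BSet Γ k ∪
      {x | ∃ (p i : ℕ), (i = 1 ∨ i = 2) ∧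
        (∃ y ∈ BSet Γ k, ∃ t : BLit, ReachSet Γ y.1 (.ex (.pos p) t)) ∧
        x = ({atomE p}, i)}

/-- The witness set `B = ⋃_k B_k`. -/
def BAll (Γ : Set Formula) : Set (Set ETerm × ℕ) := ⋃ k, BSet Γ k

/-- Condition (C). -/
def CondC (Γ : Set Formula) : Prop :=
  ∃ (V : Set ETerm) (i : ℕ) (W : Set ETerm) (j : ℕ),
    (V, i) ∈ BAll Γ ∧ (W, j) ∈ BAll Γ ∧
    ∃ q o r : ℕ,
      ((ReachSet Γ V (atomE q) ∧ ReachSet Γ V (.lit (.neg q))) ∨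
       (ReachSet Γ V (.ex (.pos q) (.neg r)) ∧ ReachSet Γ V (.al (.pos o) (.pos r)) ∧
         Reach Γ (atomE q) (atomE o)) ∨
       (ReachSet Γ V (.al (.pos q) (.neg r)) ∧ ReachSet Γ V (.ex (.pos o) (.pos r)) ∧
         Reach Γ (atomE o) (atomE q)) ∨
       (ReachSet Γ V (.al (.pos q) (.neg r)) ∧ ReachSet Γ V (.al (.pos o) (.pos r)) ∧
         ReachSet Γ W (atomE q) ∧ ReachSet Γ W (atomE o)))

/-- The set `Γ` of R-formulas used in the proof that `R` admits no sound
and complete direct syllogistic system (indices `0,…,n-1`). -/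
def GammaSet (n : ℕ) (p : ℕ → ℕ) (r : ℕ) : Set Formula :=
  {φ | (∃ i, i + 1 < n ∧ φ = .al (atomE (p i)) (.ex (.pos (p (i + 1))) (.pos r))) ∨
       φ = .al (atomE (p 0)) (.al (.pos (p (n - 1))) (.pos r)) ∨
       (∃ q : ℕ, φ = .al (atomE q) (atomE q)) ∨
       (∃ i j, i < j ∧ j < n ∧ φ = .al (atomE (p i)) (.lit (.neg (p j))))}

/-- `Γ` is R*-complete: for every R*-formula `θ`, `θ ∈ Γ` or `θ̄ ∈ Γ`. -/
def RstarComplete (Γ : Set Formula) : Prop :=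
  ∀ θ ∈ FragRstar, θ ∈ Γ ∨ Formula.bar θ ∈ Γ

/-- Domain of the canonical structure for `Γ`: triples `(c₁,c₂,Q)` of two
positive c-terms and a quantifier (`Bool`, with `true` rendering `∃` and
`false` rendering `∀`) such that `Γ ⊩_{R*} ∃(c₁,c₂)`. -/
abbrev CanonA (Γ : Set Formula) : Type :=
  {x : ETerm × ETerm × Bool //
    x.1.isPosC ∧ x.2.1.isPosC ∧ IDerives RuleSetRstar Γ (.ex x.1 x.2.1)}

/-- The canonical structure constructed from `Γ`. -/
def CanonInterp (Γ : Set Formula) : Interp (CanonA Γ) where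
  up p := {x | IDerives RuleSetRstar Γ (.al x.val.1 (atomE p)) ∨
               IDerives RuleSetRstar Γ (.al x.val.2.1 (atomE p))}
  br r := {ab |
      (∃ c ∈ ({ab.1.val.1, ab.1.val.2.1} : Set ETerm),
       ∃ d ∈ ({ab.2.val.1, ab.2.val.2.1} : Set ETerm),
       ∃ q : ℕ,
         IDerives RuleSetRstar Γ (.al c (.al (.pos q) (.pos r))) ∧
         IDerives RuleSetRstar Γ (.al d (atomE q))) ∨
      (ab.2.val.2.2 = true ∧
       ∃ q : ℕ, ab.2.val.1 = atomE q ∧ ab.2.val.2.1 = atomE q ∧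
       ∃ c ∈ ({ab.1.val.1, ab.1.val.2.1} : Set ETerm),
         IDerives RuleSetRstar Γ (.al c (.ex (.pos q) (.pos r))))}


/-! ### Basic lemmas -/

@[simp] lemma Lit.bar_bar (l : Lit) : l.bar.bar = l := by cases l <;> rfl
@[simp] lemma BLit.bar_bar (t : BLit) : t.bar.bar = t := by cases t <;> rfl
@[simp] lemma ETerm.bar_bar (e : ETerm) : e.bar.bar = e := by
  cases e <;> simp [ETerm.bar]
@[simp] lemma Formula.swap_swap (φ : Formula) : φ.swap.swap = φ := by
  cases φ <;> simp [Formula.swap]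

lemma formEquiv_symm {φ ψ : Formula} (h : FormEquiv φ ψ) : FormEquiv ψ φ := by
  rcases h with h | h
  · exact Or.inl h.symm
  · exact Or.inr (by rw [h, Formula.swap_swap])

@[simp] lemma atomE_inj {p q : ℕ} : atomE p = atomE q ↔ p = q := by
  constructor
  · intro h; simpa [atomE] using h
  · rintro rfl; rfl

section Sem
variable {A : Type} (M : Interp A)

lemma litI_bar (l : Lit) : M.litI l.bar = (M.litI l)ᶜ := by
  cases l <;> simp [Lit.bar, Interp.litI]
lemma blitI_bar (t : BLit) : M.blitI t.bar = (M.blitI t)ᶜ := by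
  cases t <;> simp [BLit.bar, Interp.blitI]

lemma etermI_bar (e : ETerm) : M.etermI e.bar = (M.etermI e)ᶜ := by
  cases e with
  | lit l => simp [ETerm.bar, Interp.etermI, litI_bar]
  | ex l t =>
      ext a
      simp [ETerm.bar, Interp.etermI, blitI_bar, Set.mem_compl_iff]
  | al l t =>
      ext a
      simp [ETerm.bar, Interp.etermI, blitI_bar, Set.mem_compl_iff]

lemma sat_swap (φ : Formula) : M.Sat φ ↔ M.Sat φ.swap := by
  cases φ with
  | ex e f =>
      simp only [Formula.swap, Interp.Sat]
      rw [Set.inter_comm]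
  | al e f =>
      simp only [Formula.swap, Interp.Sat, etermI_bar]
      exact ⟨fun h => Set.compl_subset_compl.mpr h, fun h => by
        simpa using Set.compl_subset_compl.mpr h⟩

lemma sat_equiv {φ ψ : Formula} (h : FormEquiv φ ψ) : M.Sat φ ↔ M.Sat ψ := by
  rcases h with rfl | rfl
  · rfl
  · exact sat_swap M φ

lemma sat_absurd {b : Formula} (hb : IsAbsurd b) : ¬ M.Sat b := by
  obtain ⟨e, rfl⟩ := hb
  intro h
  obtain ⟨a, ha1, ha2⟩ := h
  rw [etermI_bar] at ha2
  exact ha2 ha1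

end Sem

/-! ### Substitution lemmas -/

def gid : Subst := ⟨id, id⟩

@[simp] lemma Lit.subst_id (l : Lit) : l.subst gid = l := by cases l <;> rfl
@[simp] lemma BLit.subst_id (t : BLit) : t.subst gid = t := by cases t <;> rfl
@[simp] lemma ETerm.subst_id (e : ETerm) : e.subst gid = e := by
  cases e <;> simp [ETerm.subst]
@[simp] lemma Formula.subst_id (φ : Formula) : φ.subst gid = φ := by
  cases φ <;> simp [Formula.subst]

@[simp] lemma subst_atomE (g : Subst) (p : ℕ) :
    ETerm.subst g (atomE p) = atomE (g.u p) := rfl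

lemma Lit.bar_subst (g : Subst) (l : Lit) : (l.bar).subst g = (l.subst g).bar := by
  cases l <;> rfl
lemma BLit.bar_subst (g : Subst) (t : BLit) : (t.bar).subst g = (t.subst g).bar := by
  cases t <;> rfl
lemma ETerm.bar_subst (g : Subst) (e : ETerm) : (e.bar).subst g = (e.subst g).bar := by
  cases e <;> simp [ETerm.bar, ETerm.subst, Lit.bar_subst, BLit.bar_subst]

lemma Lit.isPos_subst {g : Subst} {l : Lit} (h : l.isPos) : (l.subst g).isPos := by
  cases l
  · trivial
  · exact h
lemma ETerm.isC_subst {g : Subst} {c : ETerm} (h : c.isC) : (c.subst g).isC := by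
  cases c with
  | lit l => trivial
  | ex l t => exact Lit.isPos_subst h
  | al l t => exact Lit.isPos_subst h

/-! ### Derivation helpers -/

section Der
variable {Γ : Set Formula}

lemma derives_of_rule (R : SylRule) (hR : R ∈ RuleSetR)
    (h : ∀ ψ ∈ R.ants, Derives RuleSetR Γ ψ) : Derives RuleSetR Γ R.con := by
  have := Derives.rule (X := RuleSetR) R gid hR
    (fun ψ hψ => by rw [Formula.subst_id]; exact h ψ hψ)
  rwa [Formula.subst_id] at this

lemma dSwap {φ : Formula} (h : Derives RuleSetR Γ φ) :
    Derives RuleSetR Γ φ.swap := h.ident (Or.inr rfl)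

lemma dMemMod {φ : Formula} (h : MemMod Γ φ) : Derives RuleSetR Γ φ := by
  obtain ⟨ψ, hψ, he⟩ := h
  exact (Derives.mem hψ).ident (formEquiv_symm he)

lemma ants_two {φ₁ φ₂ : Formula} (h1 : Derives RuleSetR Γ φ₁)
    (h2 : Derives RuleSetR Γ φ₂) :
    ∀ ψ ∈ ({φ₁, φ₂} : Finset Formula), Derives RuleSetR Γ ψ := by
  intro ψ hψ
  simp only [Finset.mem_insert, Finset.mem_singleton] at hψ
  rcases hψ with rfl | rfl
  · exact h1
  · exact h2

lemma ants_one {φ₁ : Formula} (h1 : Derives RuleSetR Γ φ₁) :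
    ∀ ψ ∈ ({φ₁} : Finset Formula), Derives RuleSetR Γ ψ := by
  intro ψ hψ
  simp only [Finset.mem_singleton] at hψ
  rcases hψ with rfl
  exact h1

lemma dD1 {p q : ℕ} {c : ETerm} (hc : c.isC)
    (h1 : Derives RuleSetR Γ (.ex (atomE p) (atomE q)))
    (h2 : Derives RuleSetR Γ (.al (atomE q) c)) :
    Derives RuleSetR Γ (.ex (atomE p) c) :=
  derives_of_rule ⟨{.ex (atomE p) (atomE q), .al (atomE q) c}, .ex (atomE p) c⟩
    (Or.inl ⟨p, q, c, hc, rfl⟩) (ants_two h1 h2)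

lemma dD2 {p q : ℕ} {c : ETerm} (hc : c.isC)
    (h1 : Derives RuleSetR Γ (.al (atomE p) (atomE q)))
    (h2 : Derives RuleSetR Γ (.ex (atomE p) c)) :
    Derives RuleSetR Γ (.ex (atomE q) c) :=
  derives_of_rule ⟨{.al (atomE p) (atomE q), .ex (atomE p) c}, .ex (atomE q) c⟩
    (Or.inr (Or.inl ⟨p, q, c, hc, rfl⟩)) (ants_two h1 h2)

lemma dD3 {p q : ℕ} {c : ETerm} (hc : c.isC)
    (h1 : Derives RuleSetR Γ (.al (atomE q) c.bar))
    (h2 : Derives RuleSetR Γ (.ex (atomE p) c)) :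
    Derives RuleSetR Γ (.ex (atomE p) (.lit (.neg q))) :=
  derives_of_rule ⟨{.al (atomE q) c.bar, .ex (atomE p) c}, .ex (atomE p) (.lit (.neg q))⟩
    (Or.inr (Or.inr (Or.inl ⟨p, q, c, hc, rfl⟩))) (ants_two h1 h2)

lemma dB {p q : ℕ} {c : ETerm} (hc : c.isC)
    (h1 : Derives RuleSetR Γ (.al (atomE p) (atomE q)))
    (h2 : Derives RuleSetR Γ (.al (atomE q) c)) :
    Derives RuleSetR Γ (.al (atomE p) c) :=
  derives_of_rule ⟨{.al (atomE p) (atomE q), .al (atomE q) c}, .al (atomE p) c⟩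
    (Or.inr (Or.inr (Or.inr (Or.inl ⟨p, q, c, hc, rfl⟩)))) (ants_two h1 h2)

lemma dT (p : ℕ) : Derives RuleSetR Γ (.al (atomE p) (atomE p)) :=
  derives_of_rule ⟨∅, .al (atomE p) (atomE p)⟩
    (Or.inr (Or.inr (Or.inr (Or.inr (Or.inl ⟨p, rfl⟩))))) (by intro ψ hψ; simp at hψ)

lemma dI {p : ℕ} {c : ETerm} (hc : c.isC)
    (h1 : Derives RuleSetR Γ (.ex (atomE p) c)) :
    Derives RuleSetR Γ (.ex (atomE p) (atomE p)) :=
  derives_of_rule ⟨{.ex (atomE p) c}, .ex (atomE p) (atomE p)⟩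
    (Or.inr (Or.inr (Or.inr (Or.inr (Or.inr (Or.inl ⟨p, c, hc, rfl⟩)))))) (ants_one h1)

lemma dII {p q : ℕ} {t : BLit}
    (h1 : Derives RuleSetR Γ (.ex (atomE p) (.ex (.pos q) t))) :
    Derives RuleSetR Γ (.ex (atomE q) (atomE q)) :=
  derives_of_rule ⟨{.ex (atomE p) (.ex (.pos q) t)}, .ex (atomE q) (atomE q)⟩
    (Or.inr (Or.inr (Or.inr (Or.inr (Or.inr (Or.inr (Or.inr (Or.inl ⟨p, q, t, rfl⟩))))))))
    (ants_one h1)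

lemma dAA {p q q' : ℕ} {t : BLit}
    (h1 : Derives RuleSetR Γ (.al (atomE p) (.al (.pos q') t)))
    (h2 : Derives RuleSetR Γ (.ex (atomE q) (atomE q'))) :
    Derives RuleSetR Γ (.al (atomE p) (.ex (.pos q) t)) :=
  derives_of_rule ⟨{.al (atomE p) (.al (.pos q') t), .ex (atomE q) (atomE q')},
      .al (atomE p) (.ex (.pos q) t)⟩
    (Or.inr (Or.inr (Or.inr (Or.inr (Or.inr (Or.inr (Or.inr (Or.inr (Or.inl ⟨p, q, q', t, rfl⟩)))))))))
    (ants_two h1 h2)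

lemma dEE {p q q' : ℕ} {t : BLit}
    (h1 : Derives RuleSetR Γ (.ex (atomE p) (.ex (.pos q) t)))
    (h2 : Derives RuleSetR Γ (.al (atomE q) (atomE q'))) :
    Derives RuleSetR Γ (.ex (atomE p) (.ex (.pos q') t)) :=
  derives_of_rule ⟨{.ex (atomE p) (.ex (.pos q) t), .al (atomE q) (atomE q')},
      .ex (atomE p) (.ex (.pos q') t)⟩
    (Or.inr (Or.inr (Or.inr (Or.inr (Or.inr (Or.inr (Or.inr (Or.inr (Or.inr (Or.inl ⟨p, q, q', t, rfl⟩))))))))))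
    (ants_two h1 h2)

lemma dAE {p q q' : ℕ} {t : BLit}
    (h1 : Derives RuleSetR Γ (.al (atomE p) (.ex (.pos q) t)))
    (h2 : Derives RuleSetR Γ (.al (atomE q) (atomE q'))) :
    Derives RuleSetR Γ (.al (atomE p) (.ex (.pos q') t)) :=
  derives_of_rule ⟨{.al (atomE p) (.ex (.pos q) t), .al (atomE q) (atomE q')},
      .al (atomE p) (.ex (.pos q') t)⟩
    (Or.inr (Or.inr (Or.inr (Or.inr (Or.inr (Or.inr (Or.inr (Or.inr (Or.inr (Or.inr ⟨p, q, q', t, rfl⟩))))))))))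
    (ants_two h1 h2)

end Der

/-! ### Soundness of the rule set R -/

section Sound
variable {A : Type} (M : Interp A)

lemma semD1 {e f c : ETerm} (h1 : M.Sat (.ex e f)) (h2 : M.Sat (.al f c)) :
    M.Sat (.ex e c) := by
  obtain ⟨a, ha1, ha2⟩ := h1
  exact ⟨a, ha1, h2 ha2⟩

lemma semD2 {e f c : ETerm} (h1 : M.Sat (.al e f)) (h2 : M.Sat (.ex e c)) :
    M.Sat (.ex f c) := by
  obtain ⟨a, ha1, ha2⟩ := h2
  exact ⟨a, h1 ha1, ha2⟩

lemma semD3 {e f c : ETerm} (h1 : M.Sat (.al f c.bar)) (h2 : M.Sat (.ex e c)) :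
    M.Sat (.ex e f.bar) := by
  obtain ⟨a, ha1, ha2⟩ := h2
  refine ⟨a, ha1, ?_⟩
  rw [etermI_bar]
  intro haf
  have := h1 haf
  rw [etermI_bar] at this
  exact this ha2

lemma semB {e f c : ETerm} (h1 : M.Sat (.al e f)) (h2 : M.Sat (.al f c)) :
    M.Sat (.al e c) := fun a ha => h2 (h1 ha)

lemma semT (e : ETerm) : M.Sat (.al e e) := fun _ ha => ha

lemma semI {e c : ETerm} (h1 : M.Sat (.ex e c)) : M.Sat (.ex e e) := by
  obtain ⟨a, ha1, _⟩ := h1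
  exact ⟨a, ha1, ha1⟩

lemma semA {e c : ETerm} (h1 : M.Sat (.al e e.bar)) : M.Sat (.al e c) := by
  intro a ha
  have := h1 ha
  rw [etermI_bar] at this
  exact absurd ha this

lemma semII {e : ETerm} {l : Lit} {t : BLit} (h1 : M.Sat (.ex e (.ex l t))) :
    M.Sat (.ex (.lit l) (.lit l)) := by
  obtain ⟨a, _, b, hb, _⟩ := h1
  exact ⟨b, hb, hb⟩

lemma semAA {e : ETerm} {l l' : Lit} {t : BLit}
    (h1 : M.Sat (.al e (.al l' t))) (h2 : M.Sat (.ex (.lit l) (.lit l'))) :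
    M.Sat (.al e (.ex l t)) := by
  intro a ha
  obtain ⟨b, hb1, hb2⟩ := h2
  exact ⟨b, hb1, h1 ha b hb2⟩

lemma semEE {e : ETerm} {l l' : Lit} {t : BLit}
    (h1 : M.Sat (.ex e (.ex l t))) (h2 : M.Sat (.al (.lit l) (.lit l'))) :
    M.Sat (.ex e (.ex l' t)) := by
  obtain ⟨a, ha, b, hb1, hb2⟩ := h1
  exact ⟨a, ha, b, h2 hb1, hb2⟩

lemma semAE {e : ETerm} {l l' : Lit} {t : BLit}
    (h1 : M.Sat (.al e (.ex l t))) (h2 : M.Sat (.al (.lit l) (.lit l'))) :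
    M.Sat (.al e (.ex l' t)) := by
  intro a ha
  obtain ⟨b, hb1, hb2⟩ := h1 ha
  exact ⟨b, h2 hb1, hb2⟩

end Sound

lemma soundnessR {Θ : Set Formula} {θ : Formula}
    (h : Derives RuleSetR Θ θ) : Entails Θ θ := by
  induction h with
  | mem h => exact fun A hA M hM => hM _ h
  | ident h he ih => exact fun A hA M hM => (sat_equiv M he).mp (ih A hA M hM)
  | rule R g hR hants ih =>
    simp only [RuleSetR, Set.mem_setOf_eq] at hR
    intro A hA M hM
    rcases hR with ⟨p,q,c,hc,rfl⟩|⟨p,q,c,hc,rfl⟩|⟨p,q,c,hc,rfl⟩|⟨p,q,c,hc,rfl⟩|⟨p,rfl⟩|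
      ⟨p,c,hc,rfl⟩|⟨p,c,hc,rfl⟩|⟨p,q,t,rfl⟩|⟨p,q,q',t,rfl⟩|⟨p,q,q',t,rfl⟩|⟨p,q,q',t,rfl⟩
    · -- D1
      have h1 := ih (.ex (atomE p) (atomE q)) (by simp) A hA M hM
      have h2 := ih (.al (atomE q) c) (by simp) A hA M hM
      simp only [Formula.subst, subst_atomE] at h1 h2 ⊢
      exact semD1 M h1 h2
    · -- D2
      have h1 := ih (.al (atomE p) (atomE q)) (by simp) A hA M hM
      have h2 := ih (.ex (atomE p) c) (by simp) A hA M hM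
      simp only [Formula.subst, subst_atomE] at h1 h2 ⊢
      exact semD2 M h1 h2
    · -- D3
      have h1 := ih (.al (atomE q) c.bar) (by simp) A hA M hM
      have h2 := ih (.ex (atomE p) c) (by simp) A hA M hM
      simp only [Formula.subst, subst_atomE] at h1 h2 ⊢
      rw [ETerm.bar_subst] at h1
      have := semD3 M h1 h2
      simpa [atomE, ETerm.bar, Lit.bar, ETerm.subst, Lit.subst] using this
    · -- B
      have h1 := ih (.al (atomE p) (atomE q)) (by simp) A hA M hM
      have h2 := ih (.al (atomE q) c) (by simp) A hA M hM
      simp only [Formula.subst, subst_atomE] at h1 h2 ⊢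
      exact semB M h1 h2
    · -- T
      simp only [Formula.subst, subst_atomE]
      exact semT M _
    · -- I
      have h1 := ih (.ex (atomE p) c) (by simp) A hA M hM
      simp only [Formula.subst, subst_atomE] at h1 ⊢
      exact semI M h1
    · -- A
      have h1 := ih (.al (atomE p) (.lit (.neg p))) (by simp) A hA M hM
      simp only [Formula.subst, subst_atomE] at h1 ⊢
      have h1' : M.Sat (.al (atomE (g.u p)) (atomE (g.u p)).bar) := by
        simpa [atomE, ETerm.bar, Lit.bar, ETerm.subst, Lit.subst] using h1
      exact semA M h1'
    · -- II
      have h1 := ih (.ex (atomE p) (.ex (.pos q) t)) (by simp) A hA M hM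
      simp only [Formula.subst, subst_atomE, ETerm.subst, Lit.subst] at h1 ⊢
      exact semII M h1
    · -- ∀∀
      have h1 := ih (.al (atomE p) (.al (.pos q') t)) (by simp) A hA M hM
      have h2 := ih (.ex (atomE q) (atomE q')) (by simp) A hA M hM
      simp only [Formula.subst, subst_atomE, ETerm.subst, Lit.subst] at h1 h2 ⊢
      exact semAA M h1 h2
    · -- ∃∃
      have h1 := ih (.ex (atomE p) (.ex (.pos q) t)) (by simp) A hA M hM
      have h2 := ih (.al (atomE q) (atomE q')) (by simp) A hA M hM
      simp only [Formula.subst, subst_atomE, ETerm.subst, Lit.subst] at h1 h2 ⊢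
      exact semEE M h1 h2
    · -- ∀∃
      have h1 := ih (.al (atomE p) (.ex (.pos q) t)) (by simp) A hA M hM
      have h2 := ih (.al (atomE q) (atomE q')) (by simp) A hA M hM
      simp only [Formula.subst, subst_atomE, ETerm.subst, Lit.subst] at h1 h2 ⊢
      exact semAE M h1 h2

/-! ### Syntactic consequences of reachability -/

section Syn
variable {Γ : Set Formula}

lemma chainDer {s : ℕ} {d : ETerm} (hd : d.isC) (h : Reach Γ (atomE s) d) :
    Derives RuleSetR Γ (.al (atomE s) d) := by
  rcases h with h | ⟨k, p, hc0, hlast, hmid⟩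
  · rw [← h]; exact dT s
  · have hs : s = p 0 := atomE_inj.mp hc0
    rw [hs]
    clear hc0 hs
    induction k generalizing p with
    | zero => exact dMemMod hlast
    | succ k IH =>
      have step := dMemMod (hmid 0 (Nat.succ_pos _))
      have rest := IH (fun i => p (i + 1)) hlast (fun i hi => hmid (i + 1) (by omega))
      exact dB hd step rest

lemma reach_norm {c d : ETerm} (hd : d.isC) (h : Reach Γ c d) :
    c = d ∨ ∃ s, c = atomE s ∧ Derives RuleSetR Γ (.al (atomE s) d) := by
  rcases h with rfl | ⟨k, p, hc0, hlast, hmid⟩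
  · exact Or.inl rfl
  · exact Or.inr ⟨p 0, hc0, chainDer hd (Or.inr ⟨k, p, rfl, hlast, hmid⟩)⟩

lemma reachDer {s : ℕ} {d : ETerm} (hd : d.isC) (h : Reach Γ (atomE s) d) :
    Derives RuleSetR Γ (.al (atomE s) d) := chainDer hd h

lemma reach_norm_pair {p : ℕ} {c₀ d : ETerm} (hd : d.isC)
    (h : ReachSet Γ ({atomE p, c₀} : Set ETerm) d) :
    Derives RuleSetR Γ (.al (atomE p) d) ∨ c₀ = d ∨
      ∃ s, c₀ = atomE s ∧ Derives RuleSetR Γ (.al (atomE s) d) := by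
  obtain ⟨c, hcV, hcd⟩ := h
  simp only [Set.mem_insert_iff, Set.mem_singleton_iff] at hcV
  rcases hcV with rfl | rfl
  · exact Or.inl (reachDer hd hcd)
  · rcases reach_norm hd hcd with rfl | hs
    · exact Or.inr (Or.inl rfl)
    · exact Or.inr (Or.inr hs)

lemma dSS {p s : ℕ} (hder : Derives RuleSetR Γ (.ex (atomE p) (atomE s))) :
    Derives RuleSetR Γ (.ex (atomE s) (atomE s)) :=
  dI (c := atomE p) trivial (dSwap hder)

lemma exW {p : ℕ} {c₀ d : ETerm} (hc : c₀.isC)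
    (hder : Derives RuleSetR Γ (.ex (atomE p) c₀)) (hd : d.isC)
    (hr : ReachSet Γ ({atomE p, c₀} : Set ETerm) d) :
    Derives RuleSetR Γ (.ex (atomE p) d) := by
  rcases reach_norm_pair hd hr with hA | hB | ⟨s, rfl, hC⟩
  · exact dD1 hd (dI hc hder) hA
  · exact hB ▸ hder
  · exact dD1 hd hder hC

lemma bStructAux (k : ℕ) :
    ∀ x ∈ BSet Γ k, ∃ (p : ℕ) (c₀ : ETerm), c₀.isC ∧ x.1 = {atomE p, c₀} ∧
      Derives RuleSetR Γ (.ex (atomE p) c₀) := by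
  induction k with
  | zero =>
    rintro x ⟨p, c, hc, hm, rfl⟩
    exact ⟨p, c, hc, rfl, dMemMod hm⟩
  | succ k IH =>
    rintro x (hx | ⟨p, i, hi, ⟨y, hy, t, hr⟩, rfl⟩)
    · exact IH x hx
    · obtain ⟨p', c₀', hc', hyV, hder⟩ := IH y hy
      rw [hyV] at hr
      have hex : Derives RuleSetR Γ (.ex (atomE p') (.ex (.pos p) t)) :=
        exW hc' hder trivial hr
      exact ⟨p, atomE p, trivial, (Set.pair_eq_singleton _).symm, dSS (dII hex)⟩

lemma bStruct {V : Set ETerm} {i : ℕ} (h : (V, i) ∈ BAll Γ) :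
    ∃ (p : ℕ) (c₀ : ETerm), c₀.isC ∧ V = {atomE p, c₀} ∧
      Derives RuleSetR Γ (.ex (atomE p) c₀) := by
  obtain ⟨k, hk⟩ := Set.mem_iUnion.mp h
  exact bStructAux k (V, i) hk

lemma claimU {p : ℕ} {c₀ d₁ d₂ : ETerm} (hc : c₀.isC)
    (hder : Derives RuleSetR Γ (.ex (atomE p) c₀))
    (hd1 : d₁.isC) (hd2 : d₂.isC) (hne : d₁ ≠ d₂)
    (h1 : ReachSet Γ ({atomE p, c₀} : Set ETerm) d₁)
    (h2 : ReachSet Γ ({atomE p, c₀} : Set ETerm) d₂) :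
    ∃ a, (Derives RuleSetR Γ (.ex (atomE a) d₁) ∧ Derives RuleSetR Γ (.al (atomE a) d₂)) ∨
         (Derives RuleSetR Γ (.ex (atomE a) d₂) ∧ Derives RuleSetR Γ (.al (atomE a) d₁)) := by
  rcases reach_norm_pair hd2 h2 with hA2 | hB2 | ⟨s, hs, hC2⟩
  · exact ⟨p, Or.inl ⟨exW hc hder hd1 h1, hA2⟩⟩
  · subst hB2
    rcases reach_norm_pair hd1 h1 with hA1 | hB1 | ⟨s, hs, hC1⟩
    · exact ⟨p, Or.inr ⟨hder, hA1⟩⟩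
    · exact absurd hB1.symm hne
    · subst hs
      exact ⟨s, Or.inr ⟨dSS hder, hC1⟩⟩
  · subst hs
    rcases reach_norm_pair hd1 h1 with hA1 | hB1 | ⟨s', hs', hC1⟩
    · exact ⟨p, Or.inr ⟨exW hc hder hd2 h2, hA1⟩⟩
    · rw [← hB1]
      exact ⟨s, Or.inl ⟨dSS hder, hC2⟩⟩
    · have hss : s = s' := atomE_inj.mp hs'
      subst hss
      exact ⟨s, Or.inl ⟨dD1 hd1 (dSS hder) hC1, hC2⟩⟩

lemma reach_norm_pair_atom {p q : ℕ} {c₀ : ETerm}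
    (h : ReachSet Γ ({atomE p, c₀} : Set ETerm) (atomE q)) :
    Derives RuleSetR Γ (.al (atomE p) (atomE q)) ∨
      ∃ s, c₀ = atomE s ∧ Derives RuleSetR Γ (.al (atomE s) (atomE q)) := by
  rcases reach_norm_pair (d := atomE q) trivial h with hA | hB | hC
  · exact Or.inl hA
  · exact Or.inr ⟨q, hB, dT q⟩
  · exact Or.inr hC

lemma exPair {p q o : ℕ} {c₀ : ETerm} (hc : c₀.isC)
    (hder : Derives RuleSetR Γ (.ex (atomE p) c₀))
    (h1 : ReachSet Γ ({atomE p, c₀} : Set ETerm) (atomE q))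
    (h2 : ReachSet Γ ({atomE p, c₀} : Set ETerm) (atomE o)) :
    Derives RuleSetR Γ (.ex (atomE q) (atomE o)) := by
  rcases reach_norm_pair_atom h1 with hA1 | ⟨s, hs, hC1⟩
  · rcases reach_norm_pair_atom h2 with hA2 | ⟨s2, hs2, hC2⟩
    · have e1 := dD1 (c := atomE q) trivial (dI hc hder) hA1
      exact dSwap (dD2 (c := atomE q) trivial hA2 e1)
    · subst hs2
      have e1 := dD1 (c := atomE o) trivial hder hC2
      exact dD2 (c := atomE o) trivial hA1 e1
  · subst hs
    rcases reach_norm_pair_atom h2 with hA2 | ⟨s2, hs2, hC2⟩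
    · have e1 := dD1 (c := atomE q) trivial hder hC1
      exact dSwap (dD2 (c := atomE q) trivial hA2 e1)
    · have hss : s = s2 := atomE_inj.mp hs2
      subst hss
      have e1 := dD1 (c := atomE q) trivial (dSS hder) hC1
      exact dSwap (dD2 (c := atomE q) trivial hC2 e1)

/-! ### Condition (C) implies derivability of an absurdity -/

lemma condC_derive (hC : CondC Γ) :
    ∃ b, IsAbsurd b ∧ Derives RuleSetR Γ b := by
  obtain ⟨V, i, W, j, hV, hW, q, o, r, hcase⟩ := hC
  obtain ⟨p, c₀, hc, hVeq, hder⟩ := bStruct hV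
  subst hVeq
  rcases hcase with ⟨ha1, ha2⟩ | ⟨hb1, hb2, hb3⟩ | ⟨hc1, hc2, hc3⟩ | ⟨hd1, hd2, hd3, hd4⟩
  · -- (a)
    obtain ⟨a, ⟨hE, hA⟩ | ⟨hE, hA⟩⟩ :=
      claimU (d₁ := atomE q) (d₂ := .lit (.neg q)) hc hder trivial trivial (by simp [atomE]) ha1 ha2
    · exact ⟨_, ⟨.lit (.pos a), rfl⟩, dD3 (c := atomE q) trivial hA hE⟩
    · exact ⟨_, ⟨.lit (.pos a), rfl⟩, dD3 (c := .lit (.neg q)) trivial hA hE⟩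
  · -- (b)
    have hqo := reachDer (d := atomE o) trivial hb3
    obtain ⟨a, ⟨hE, hA⟩ | ⟨hE, hA⟩⟩ :=
      claimU (d₁ := ETerm.ex (.pos q) (.neg r)) (d₂ := ETerm.al (.pos o) (.pos r)) hc hder trivial trivial (by simp) hb1 hb2
    · have h3 := dEE hE hqo
      exact ⟨_, ⟨.lit (.pos a), rfl⟩, dD3 (c := .ex (.pos o) (.neg r)) trivial hA h3⟩
    · have h3 := dAE hA hqo
      exact ⟨_, ⟨.lit (.pos a), rfl⟩, dD3 (c := .al (.pos o) (.pos r)) trivial h3 hE⟩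
  · -- (c)
    have hoq := reachDer (d := atomE q) trivial hc3
    obtain ⟨a, ⟨hE, hA⟩ | ⟨hE, hA⟩⟩ :=
      claimU (d₁ := ETerm.al (.pos q) (.neg r)) (d₂ := ETerm.ex (.pos o) (.pos r)) hc hder trivial trivial (by simp) hc1 hc2
    · have h3 := dAE hA hoq
      exact ⟨_, ⟨.lit (.pos a), rfl⟩, dD3 (c := .al (.pos q) (.neg r)) trivial h3 hE⟩
    · have h3 := dEE hE hoq
      exact ⟨_, ⟨.lit (.pos a), rfl⟩, dD3 (c := .ex (.pos q) (.pos r)) trivial hA h3⟩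
  · -- (d)
    obtain ⟨p2, c₂, hc2', hWeq, hder2⟩ := bStruct hW
    subst hWeq
    have hqo := exPair hc2' hder2 hd3 hd4
    obtain ⟨a, ⟨hE, hA⟩ | ⟨hE, hA⟩⟩ :=
      claimU (d₁ := ETerm.al (.pos q) (.neg r)) (d₂ := ETerm.al (.pos o) (.pos r)) hc hder trivial trivial (by simp) hd1 hd2
    · have h3 := dAA hA hqo
      exact ⟨_, ⟨.lit (.pos a), rfl⟩, dD3 (c := .al (.pos q) (.neg r)) trivial h3 hE⟩
    · have h3 := dAA hA (dSwap hqo)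
      exact ⟨_, ⟨.lit (.pos a), rfl⟩, dD3 (c := .al (.pos o) (.pos r)) trivial h3 hE⟩

end Syn

/-! ### The model construction: ¬(C) implies satisfiability -/

section Model
variable {Γ : Set Formula}

lemma reachSet_step {V : Set ETerm} {d : ETerm} {p : ℕ}
    (h : ReachSet Γ V (atomE p)) (hm : MemMod Γ (.al (atomE p) d)) :
    ReachSet Γ V d := by
  obtain ⟨c, hcV, hcd⟩ := h
  refine ⟨c, hcV, ?_⟩
  rcases hcd with heq | ⟨k, f, hc0, hlast, hmid⟩
  · exact Or.inr ⟨0, fun _ => p, heq, hm, by omega⟩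
  · refine Or.inr ⟨k + 1, fun i => if i ≤ k then f i else p, by simpa using hc0, by simp [hm], ?_⟩
    intro i hi
    rcases Nat.lt_or_ge i k with h' | h'
    · have h1 : i ≤ k := Nat.le_of_lt h'
      have h2 : i + 1 ≤ k := h'
      simpa [h1, h2] using hmid i h'
    · have : i = k := by omega
      subst this
      have h1 : i ≤ i := le_refl i
      have h2 : ¬ (i + 1 ≤ i) := by omega
      simpa [h1, h2] using hlast

/-- Domain of the countermodel: the witness set together with a dummy point. -/
def DomR (Γ : Set Formula) : Type := {x : Set ETerm × ℕ // x ∈ BAll Γ} ⊕ PUnit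

/-- The countermodel. -/
def MR (Γ : Set Formula) : Interp (DomR Γ) where
  up p := {x | ∃ v, x = Sum.inl v ∧ ReachSet Γ v.val.1 (atomE p)}
  br r := {ab | ∃ v w, ab.1 = Sum.inl v ∧ ab.2 = Sum.inl w ∧
      ((∃ o, ReachSet Γ v.val.1 (.al (.pos o) (.pos r)) ∧ ReachSet Γ w.val.1 (atomE o)) ∨
       (∃ q, w.val = (({atomE q} : Set ETerm), 1) ∧ ReachSet Γ v.val.1 (.ex (.pos q) (.pos r))))}

lemma witness_mem {x : Set ETerm × ℕ} (hx : x ∈ BAll Γ) {q : ℕ} {t : BLit}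
    (hr : ReachSet Γ x.1 (.ex (.pos q) t)) (j : ℕ) (hj : j = 1 ∨ j = 2) :
    ((({atomE q} : Set ETerm), j)) ∈ BAll Γ := by
  obtain ⟨k, hk⟩ := Set.mem_iUnion.mp hx
  exact Set.mem_iUnion.2 ⟨k + 1, Or.inr ⟨q, j, hj, ⟨x, hk, t, hr⟩, rfl⟩⟩

lemma mem_pair_BAll (v : {x : Set ETerm × ℕ // x ∈ BAll Γ}) :
    (v.val.1, v.val.2) ∈ BAll Γ := by
  rw [Prod.mk.eta]; exact v.2

lemma reach_singleton {q : ℕ} : ReachSet Γ ({atomE q} : Set ETerm) (atomE q) :=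
  ⟨atomE q, rfl, Or.inl rfl⟩

lemma reach_of_singleton {q : ℕ} {d : ETerm}
    (h : ReachSet Γ ({atomE q} : Set ETerm) d) : Reach Γ (atomE q) d := by
  obtain ⟨c, hc, hcd⟩ := h
  rw [Set.mem_singleton_iff] at hc
  exact hc ▸ hcd

lemma central (hnc : ¬ CondC Γ) (v : {x : Set ETerm × ℕ // x ∈ BAll Γ})
    {d : ETerm} (hd : d.isC) (hr : ReachSet Γ v.val.1 d) :
    (Sum.inl v : DomR Γ) ∈ (MR Γ).etermI d := by
  cases d with
  | lit l =>
    cases l with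
    | pos q => exact ⟨v, rfl, hr⟩
    | neg q =>
      simp only [Interp.etermI, Interp.litI, MR, Set.mem_compl_iff, Set.mem_setOf_eq]
      rintro ⟨v', hv', hr'⟩
      injection hv' with hv'
      subst hv'
      exact hnc ⟨v.val.1, v.val.2, v.val.1, v.val.2, mem_pair_BAll v, mem_pair_BAll v,
        q, q, 0, Or.inl ⟨hr', hr⟩⟩
  | ex l t =>
    cases l with
    | neg q => exact hd.elim
    | pos q =>
      cases t with
      | pos r =>
        refine ⟨Sum.inl ⟨(({atomE q} : Set ETerm), 1), witness_mem v.2 hr 1 (Or.inl rfl)⟩,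
          ⟨_, rfl, reach_singleton⟩, ?_⟩
        exact ⟨v, _, rfl, rfl, Or.inr ⟨q, rfl, hr⟩⟩
      | neg r =>
        refine ⟨Sum.inl ⟨(({atomE q} : Set ETerm), 2), witness_mem v.2 hr 2 (Or.inr rfl)⟩,
          ⟨_, rfl, reach_singleton⟩, ?_⟩
        simp only [Interp.blitI, MR, Set.mem_compl_iff, Set.mem_setOf_eq]
        rintro ⟨v', w', hv', hw', hcl⟩
        injection hv' with hv'
        injection hw' with hw'
        subst hv'; subst hw'
        rcases hcl with ⟨o, hvo, hwo⟩ | ⟨q', hw1, hvq'⟩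
        · exact hnc ⟨v.val.1, v.val.2, v.val.1, v.val.2, mem_pair_BAll v, mem_pair_BAll v,
            q, o, r, Or.inr (Or.inl ⟨hr, hvo, reach_of_singleton hwo⟩)⟩
        · simp at hw1
  | al l t =>
    cases l with
    | neg q => exact hd.elim
    | pos q =>
      cases t with
      | pos r =>
        rintro b ⟨w, rfl, hwq⟩
        exact ⟨v, w, rfl, rfl, Or.inl ⟨q, hr, hwq⟩⟩
      | neg r =>
        rintro b ⟨w, rfl, hwq⟩
        simp only [Interp.blitI, MR, Set.mem_compl_iff, Set.mem_setOf_eq]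
        rintro ⟨v', w', hv', hw', hcl⟩
        injection hv' with hv'
        injection hw' with hw'
        subst hv'; subst hw'
        rcases hcl with ⟨o, hvo, hwo⟩ | ⟨q', hw1, hvq'⟩
        · exact hnc ⟨v.val.1, v.val.2, w.val.1, w.val.2, mem_pair_BAll v, mem_pair_BAll w,
            q, o, r, Or.inr (Or.inr (Or.inr ⟨hr, hvo, hwq, hwo⟩))⟩
        · rw [hw1] at hwq
          exact hnc ⟨v.val.1, v.val.2, v.val.1, v.val.2, mem_pair_BAll v, mem_pair_BAll v,
            q, q', r, Or.inr (Or.inr (Or.inl ⟨hr, hvq', reach_of_singleton hwq⟩))⟩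

lemma model_satSet (hnc : ¬ CondC Γ) (hΓ : Γ ⊆ FragR) : (MR Γ).SatSet Γ := by
  intro φ hφ
  obtain ⟨p, c, hc, hsh⟩ := hΓ hφ
  have reach_p : ReachSet Γ ({atomE p, c} : Set ETerm) (atomE p) :=
    ⟨atomE p, Set.mem_insert _ _, Or.inl rfl⟩
  have reach_c : ReachSet Γ ({atomE p, c} : Set ETerm) c :=
    ⟨c, Set.mem_insert_of_mem _ rfl, Or.inl rfl⟩
  rcases hsh with rfl | rfl | rfl | rfl
  · -- ∃(p, c)
    have hmem : ((({atomE p, c} : Set ETerm), 0)) ∈ BAll Γ :=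
      Set.mem_iUnion.2 ⟨0, ⟨p, c, hc, ⟨_, hφ, Or.inl rfl⟩, rfl⟩⟩
    exact ⟨Sum.inl ⟨_, hmem⟩, central hnc _ trivial reach_p, central hnc _ hc reach_c⟩
  · -- ∃(c, p)
    have hmem : ((({atomE p, c} : Set ETerm), 0)) ∈ BAll Γ :=
      Set.mem_iUnion.2 ⟨0, ⟨p, c, hc, ⟨_, hφ, Or.inr rfl⟩, rfl⟩⟩
    exact ⟨Sum.inl ⟨_, hmem⟩, central hnc _ hc reach_c, central hnc _ trivial reach_p⟩
  · -- ∀(p, c)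
    rintro x ⟨v, rfl, hvp⟩
    exact central hnc v hc (reachSet_step hvp ⟨_, hφ, Or.inl rfl⟩)
  · -- ∀(c, ¬p)
    intro x hxc
    simp only [Interp.etermI, Interp.litI, MR, Set.mem_compl_iff, Set.mem_setOf_eq]
    rintro ⟨v, rfl, hvp⟩
    cases c with
    | lit l =>
      cases l with
      | pos q =>
        obtain ⟨v', hv', hvq⟩ := hxc
        injection hv' with hv'
        subst hv'
        have hvnp : ReachSet Γ v.val.1 (.lit (.neg p)) :=
          reachSet_step hvq ⟨_, hφ, Or.inl rfl⟩
        exact hnc ⟨v.val.1, v.val.2, v.val.1, v.val.2, mem_pair_BAll v, mem_pair_BAll v,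
          p, p, 0, Or.inl ⟨hvp, hvnp⟩⟩
      | neg q =>
        have hmm : MemMod Γ (.al (atomE p) (atomE q)) := ⟨_, hφ, Or.inr rfl⟩
        have := central hnc v (d := atomE q) trivial (reachSet_step hvp hmm)
        exact hxc this
    | ex l t =>
      cases l with
      | neg q => exact hc.elim
      | pos q =>
        have hmm : MemMod Γ (.al (atomE p) (.al (.pos q) t.bar)) :=
          ⟨_, hφ, Or.inr (by simp [Formula.swap, ETerm.bar, atomE, Lit.bar])⟩
        have hcen := central hnc v (d := .al (.pos q) t.bar) trivial (reachSet_step hvp hmm)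
        obtain ⟨b, hbq, hbt⟩ := hxc
        have := hcen b hbq
        rw [blitI_bar] at this
        exact this hbt
    | al l t =>
      cases l with
      | neg q => exact hc.elim
      | pos q =>
        have hmm : MemMod Γ (.al (atomE p) (.ex (.pos q) t.bar)) :=
          ⟨_, hφ, Or.inr (by simp [Formula.swap, ETerm.bar, atomE, Lit.bar])⟩
        have hcen := central hnc v (d := .ex (.pos q) t.bar) trivial (reachSet_step hvp hmm)
        obtain ⟨b, hbq, hbt⟩ := hcen
        rw [blitI_bar] at hbt
        exact hbt (hxc b hbq)

lemma notCondC_sat (hnc : ¬ CondC Γ) (hΓ : Γ ⊆ FragR) : Satisfiable Γ :=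
  ⟨DomR Γ, ⟨Sum.inr PUnit.unit⟩, MR Γ, model_satSet hnc hΓ⟩

end Model

/-- for finite non-empty `Γ ⊆ R` the following are equivalent:
`Γ` derives an absurdity, `Γ` is unsatisfiable, condition (C) holds. -/
theorem R_refutation_tfae (Γ : Set Formula) (hfin : Γ.Finite)
    (hne : Γ.Nonempty) (hΓ : Γ ⊆ FragR) :
    ((∃ b, IsAbsurd b ∧ Derives RuleSetR Γ b) ↔ ¬ Satisfiable Γ) ∧
    (¬ Satisfiable Γ ↔ CondC Γ) := by
  have L1 : (∃ b, IsAbsurd b ∧ Derives RuleSetR Γ b) → ¬ Satisfiable Γ := by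
    rintro ⟨b, hb, hd⟩ ⟨A, hA, M, hM⟩
    exact sat_absurd M hb (soundnessR hd A hA M hM)
  have L2 : ¬ Satisfiable Γ → CondC Γ := by
    intro h
    by_contra hc
    exact h (notCondC_sat hc hΓ)
  have L3 := @condC_derive Γ
  exact ⟨⟨L1, fun h => L3 (L2 h)⟩, ⟨L2, fun hc hs => L1 (L3 hc) hs⟩⟩

end Syllogistic
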